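/- Assume: the items {1,…,m+1} are partitioned into goods G, chores C, and nonnegatively-valued items G_0; item m+1 satisfies v̄_i(m+1) = λ/2 for all agents i, for some λ > 0; every chore j ∈ C satisfies v̄_i(j) ≤ −λ/2 for all agents i; m ≥ 2; V = max_{i,j} |v̄_i(j)| > 0; and η = λ/(2 m n V). Let w ∈ Δ_{n−1} with Supp(w) ≠ [n], let A be any allocation maximizing Σ_k (w_k + η) v̄_k(A_k) over all allocations, and let ℓ be the agent with m+1 ∈ A_ℓ. Then w_ℓ = max_{i∈[n]} w_i, agent ℓ receives no chore (A_ℓ ∩ C = ∅), and with prices p_j = max_k (w_k + η) v̄_k(j), p(A_ℓ) ≥ λ/(2n). -/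

import Mathlib

open Finset

/-- Value of a bundle under an additive valuation. -/
def bval {α : Type*} (u : α → ℝ) (S : Finset α) : ℝ := ∑ j ∈ S, u j

/-- An allocation: every item belongs to exactly one agent's bundle. -/
def IsAlloc {n : ℕ} {I : Type*} (A : Fin n → Finset I) : Prop :=
  ∀ j : I, ∃! i : Fin n, j ∈ A i

lemma exchange {n : ℕ} {I : Type*} [DecidableEq I]
    (vb : Fin n → I → ℝ) (w : Fin n → ℝ) (η : ℝ)
    (A : Fin n → Finset I) (hA : IsAlloc A)
    (hopt : ∀ B : Fin n → Finset I, IsAlloc B →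
      ∑ k, (w k + η) * bval (vb k) (B k) ≤ ∑ k, (w k + η) * bval (vb k) (A k))
    (l : Fin n) (j : I) (hj : j ∈ A l) (k : Fin n) :
    (w k + η) * vb k j ≤ (w l + η) * vb l j := by
  by_cases hkl : k = l
  · subst hkl; exact le_rfl
  · set B : Fin n → Finset I := fun i => if i = k then insert j ((A i).erase j) else (A i).erase j with hB
    have hjl : ∀ i, j ∈ A i → i = l := fun i hi => (hA j).unique hi hj
    have hjk : j ∉ A k := fun h => hkl (hjl k h)
    have hjnot : ∀ i, i ≠ l → j ∉ A i := fun i hi h => hi (hjl i h)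
    have hBalloc : IsAlloc B := by
      intro t
      by_cases htj : t = j
      · subst htj
        refine ⟨k, by simp [hB], ?_⟩
        intro i hi
        by_contra hik
        simp [hB, hik] at hi
      · obtain ⟨i, hi, hu⟩ := hA t
        refine ⟨i, ?_, ?_⟩
        · by_cases hik : i = k
          · subst hik; simp [hB, htj, hi]
          · simp [hB, hik, htj, hi]
        · intro i' hi'
          apply hu
          by_cases hik : i' = k
          · subst hik; simp [hB, htj] at hi'; exact hi'
          · simp [hB, hik, htj] at hi'; exact hi'
    have hBval : ∀ i, bval (vb i) (B i) =
        bval (vb i) (A i) + (if i = k then vb i j else 0) - (if i = l then vb i j else 0) := by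
      intro i
      by_cases hik : i = k
      · subst hik
        have : (A i).erase j = A i := Finset.erase_eq_of_notMem hjk
        simp only [hB, if_pos rfl, if_neg hkl, bval, this,
          Finset.sum_insert hjk, if_true]
        ring
      · by_cases hil : i = l
        · subst hil
          simp only [hB, if_neg hik, if_pos rfl, bval, Finset.sum_erase_eq_sub hj, if_true]
          ring
        · have : (A i).erase j = A i := Finset.erase_eq_of_notMem (hjnot i hil)
          simp [hB, if_neg hik, if_neg hil, this]
    have hsum : ∑ i, (w i + η) * bval (vb i) (B i) =
        (∑ i, (w i + η) * bval (vb i) (A i)) + (w k + η) * vb k j - (w l + η) * vb l j := by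
      have : ∀ i ∈ Finset.univ, (w i + η) * bval (vb i) (B i) =
          (w i + η) * bval (vb i) (A i) + (if i = k then (w i + η) * vb i j else 0)
            - (if i = l then (w i + η) * vb i j else 0) := by
        intro i _
        rw [hBval i]
        split_ifs <;> ring
      rw [Finset.sum_congr rfl this, Finset.sum_sub_distrib, Finset.sum_add_distrib,
        Finset.sum_ite_eq' Finset.univ k, Finset.sum_ite_eq' Finset.univ l]
      simp
    have := hopt B hBalloc
    rw [hsum] at this
    linarith

/-- when `Supp(w) ≠ [n]`, in any allocation maximizing the
`(w+η)`-weighted welfare, the agent `ℓ` receiving the added item `m+1` has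
maximum weight, receives no chore, and has bundle price at least `λ/(2n)`,
with prices `p j = max_k (w k + η) * v̄ k j`. -/
theorem stmt13 (n m : ℕ) (hn : 0 < n) (hm : 2 ≤ m)
    (vb : Fin n → Fin (m+1) → ℝ) (lam V η : ℝ) (hlam : 0 < lam)
    (G C G0 : Finset (Fin (m+1)))
    (hcover : ∀ j, j ∈ G ∨ j ∈ C ∨ j ∈ G0)
    (hGC : Disjoint G C) (hGG0 : Disjoint G G0) (hCG0 : Disjoint C G0)
    (hGgood : ∀ j ∈ G, ∀ i, 0 < vb i j)
    (hCchore : ∀ j ∈ C, ∀ i, vb i j < 0)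
    (hG0 : ∀ j ∈ G0, (∀ i, 0 ≤ vb i j) ∧ (∃ a, 0 < vb a j) ∧ (∃ b, vb b j = 0))
    (hlast : ∀ i, vb i (Fin.last m) = lam / 2)
    (hCub : ∀ j ∈ C, ∀ i, vb i j ≤ -(lam / 2))
    (hV : 0 < V) (hVub : ∀ i j, |vb i j| ≤ V) (hVmem : ∃ i j, |vb i j| = V)
    (hη : η = lam / (2 * m * n * V))
    (w : Fin n → ℝ) (hw : w ∈ stdSimplex ℝ (Fin n))
    (hsupp : ∃ i, w i = 0)
    (A : Fin n → Finset (Fin (m+1))) (hA : IsAlloc A)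
    (hopt : ∀ B : Fin n → Finset (Fin (m+1)), IsAlloc B →
      ∑ k, (w k + η) * bval (vb k) (B k) ≤ ∑ k, (w k + η) * bval (vb k) (A k))
    (l : Fin n) (hl : Fin.last m ∈ A l) :
    (∀ i : Fin n, w i ≤ w l) ∧
    (∀ j ∈ C, j ∉ A l) ∧
    lam / (2 * n) ≤ ∑ t ∈ A l, ⨆ k, (w k + η) * vb k t := by
  have hm0 : (0:ℝ) < m := by exact_mod_cast (by omega : 0 < m)
  have hn0 : (0:ℝ) < n := by exact_mod_cast hn
  have hm2 : (2:ℝ) ≤ m := by exact_mod_cast hm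
  have hη0 : 0 < η := by
    rw [hη]
    exact div_pos hlam (by positivity)
  have hηV : η * V = lam / (2 * m * n) := by
    rw [hη]; field_simp
  have hex := exchange vb w η A hA hopt l
  -- part 1
  have part1 : ∀ i, w i ≤ w l := by
    intro i
    have h := hex (Fin.last m) hl i
    rw [hlast, hlast] at h
    have h2 := (mul_le_mul_iff_of_pos_right (by linarith : (0:ℝ) < lam/2)).mp h
    linarith
  -- w l ≥ 1/n
  have hln : 1 ≤ (n:ℝ) * w l := by
    have hsum : ∑ i, w i = 1 := hw.2
    have : ∑ i, w i ≤ ∑ _i : Fin n, w l := Finset.sum_le_sum (fun i _ => part1 i)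
    simp [Finset.sum_const, Finset.card_univ] at this
    linarith
  -- part 2
  have part2 : ∀ j ∈ C, j ∉ A l := by
    intro j hjC hjA
    obtain ⟨i0, hi0⟩ := hsupp
    have h := hex j hjA i0
    rw [hi0, zero_add] at h
    have h1 : vb l j ≤ -(lam/2) := hCub j hjC l
    have h2 : -V ≤ vb i0 j := (abs_le.mp (hVub i0 j)).1
    have k1 : -(lam / (2*m*n)) ≤ η * vb i0 j := by
      have := mul_le_mul_of_nonneg_left h2 hη0.le
      rw [← hηV]; nlinarith
    have k2 : (w l + η) * vb l j ≤ (w l + η) * (-(lam/2)) := by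
      apply mul_le_mul_of_nonneg_left h1
      have := hw.1 l
      linarith
    have hwl : 1/(n:ℝ) ≤ w l := by
      rw [div_le_iff₀ hn0] at *
      nlinarith
    -- chain: -(lam/(2mn)) ≤ (w l + η)(-(lam/2)) ≤ -(lam/(2n)) → contradiction
    have k3 : (w l + η) * (-(lam/2)) ≤ -(lam/(2*n)) := by
      have : lam/(2*n) ≤ w l * (lam/2) := by
        rw [div_le_iff₀ (by positivity : (0:ℝ) < 2*n)]
        nlinarith
      nlinarith
    have k4 : lam / (2*n) ≤ lam / (2*m*n) := by linarith
    rw [div_le_div_iff₀ (by positivity) (by positivity)] at k4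
    nlinarith [mul_pos hlam hn0]
  refine ⟨part1, part2, ?_⟩
  -- part 3
  have hbdd : ∀ t : Fin (m+1), BddAbove (Set.range fun k => (w k + η) * vb k t) :=
    fun t => Set.Finite.bddAbove (Set.finite_range _)
  have hp0 : ∀ t ∈ (A l).erase (Fin.last m), 0 ≤ ⨆ k, (w k + η) * vb k t := by
    intro t ht
    have htA : t ∈ A l := Finset.mem_of_mem_erase ht
    rcases hcover t with hG' | hC' | hG0'
    · have hpos := hGgood t hG' l
      have h1 : 0 ≤ (w l + η) * vb l t :=
        mul_nonneg (by have := hw.1 l; linarith) hpos.le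
      exact h1.trans (le_ciSup (hbdd t) l)
    · exact absurd htA (part2 t hC')
    · obtain ⟨_, _, b, hb⟩ := hG0 t hG0'
      have h1 : (0:ℝ) ≤ (w b + η) * vb b t := by rw [hb]; simp
      exact h1.trans (le_ciSup (hbdd t) b)
  have hplast : lam / (2*n) ≤ ⨆ k, (w k + η) * vb k (Fin.last m) := by
    have h1 : (w l + η) * vb l (Fin.last m) ≤ ⨆ k, (w k + η) * vb k (Fin.last m) :=
      le_ciSup (hbdd _) l
    rw [hlast] at h1
    have h2 : lam/(2*n) ≤ (w l + η) * (lam/2) := by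
      rw [div_le_iff₀ (by positivity : (0:ℝ) < 2*n)]
      nlinarith [mul_le_mul_of_nonneg_left hln hlam.le, mul_pos (mul_pos hη0 hlam) hn0]
    linarith
  calc lam / (2*n) ≤ (⨆ k, (w k + η) * vb k (Fin.last m)) +
        ∑ t ∈ (A l).erase (Fin.last m), ⨆ k, (w k + η) * vb k t := by
        have := Finset.sum_nonneg hp0
        linarith
    _ = ∑ t ∈ A l, ⨆ k, (w k + η) * vb k t := Finset.add_sum_erase _ (fun t => ⨆ k, (w k + η) * vb k t) hl
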